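/- Let w₁, w₂ be positive real numbers and let A be the 2×2 real matrix with rows (0, 1) and (−w₁, −w₂). Then the matrix exponential exp(t • A) tends to the zero matrix as t → ∞. -/

import Mathlib

attribute [local instance] Matrix.linftyOpNormedRing Matrix.linftyOpNormedAlgebra

open Matrix Filter NormedSpace

private lemma aux_tendsto_cexp {c : ℂ} (hc : c.re < 0) :
    Tendsto (fun t : ℝ => Complex.exp (t * c)) atTop (nhds 0) := by
  rw [tendsto_zero_iff_norm_tendsto_zero]
  have h1 : Tendsto (fun t : ℝ => t * c.re) atTop atBot :=
    tendsto_id.atTop_mul_const_of_neg hc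
  have h2 := Real.tendsto_exp_atBot.comp h1
  refine h2.congr fun t => ?_
  simp [Function.comp, Complex.norm_exp, Complex.mul_re]

private lemma aux_tendsto_mul_exp {c : ℝ} (hc : c < 0) :
    Tendsto (fun t : ℝ => t * Real.exp (t * c)) atTop (nhds 0) := by
  have h0 : (0:ℝ) < -c := by linarith
  have h1 : Tendsto (fun t : ℝ => -c * t) atTop atTop :=
    Tendsto.const_mul_atTop h0 tendsto_id
  have h2 := (Real.tendsto_pow_mul_exp_neg_atTop_nhds_zero 1).comp h1
  have h3 := h2.const_mul (-c)⁻¹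
  rw [mul_zero] at h3
  refine h3.congr fun t => ?_
  have hne : -c ≠ 0 := ne_of_gt h0
  simp only [Function.comp, pow_one]
  rw [show -(-c * t) = t * c by ring,
    show (-c)⁻¹ * (-c * t * Real.exp (t * c)) = ((-c)⁻¹ * (-c)) * (t * Real.exp (t * c)) by ring,
    inv_mul_cancel₀ hne, one_mul]

private lemma aux_tendsto_t_cexp {c : ℂ} (hc : c.re < 0) :
    Tendsto (fun t : ℝ => (t : ℂ) * Complex.exp (t * c)) atTop (nhds 0) := by
  rw [tendsto_zero_iff_norm_tendsto_zero]
  refine (aux_tendsto_mul_exp hc).congr' ?_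
  filter_upwards [eventually_ge_atTop (0:ℝ)] with t ht
  simp [_root_.map_mul, Complex.norm_exp,
    abs_of_nonneg ht, Complex.mul_re]

private lemma aux_exp_sq_zero (N : Matrix (Fin 2) (Fin 2) ℂ) (h : N * N = 0) :
    NormedSpace.exp N = 1 + N := by
  have hpow : ∀ n, 2 ≤ n → N ^ n = 0 := by
    intro n hn
    obtain ⟨k, rfl⟩ := Nat.exists_eq_add_of_le hn
    rw [pow_add, pow_two, h, zero_mul]
  rw [exp_eq_tsum ℂ]
  dsimp only
  rw [tsum_eq_sum (s := Finset.range 2) ?_]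
  · simp [Finset.sum_range_succ, Nat.factorial]
  · intro n hn
    rw [hpow n (by have := Finset.mem_range.not.mp hn; omega)]
    simp

private lemma aux_diag (w₁ w₂ : ℝ) (l₁ l₂ : ℂ) (hne : l₁ ≠ l₂)
    (hr₁ : l₁ ^ 2 + w₂ * l₁ + w₁ = 0) (hr₂ : l₂ ^ 2 + w₂ * l₂ + w₁ = 0)
    (h1 : l₁.re < 0) (h2 : l₂.re < 0) :
    Tendsto (fun t : ℝ => NormedSpace.exp (t • (!![0, 1; -(w₁ : ℂ), -(w₂ : ℂ)])))
      atTop (nhds 0) := by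
  set B : Matrix (Fin 2) (Fin 2) ℂ := !![0, 1; -(w₁ : ℂ), -(w₂ : ℂ)] with hB
  set P : Matrix (Fin 2) (Fin 2) ℂ := !![1, 1; l₁, l₂] with hP
  have hdet : P.det = l₂ - l₁ := by simp [hP, Matrix.det_fin_two_of]
  have hdu : IsUnit P.det := by
    rw [hdet, isUnit_iff_ne_zero]
    exact sub_ne_zero.mpr hne.symm
  have hPunit : IsUnit P := (Matrix.isUnit_iff_isUnit_det P).mpr hdu
  have hBP : B * P = P * Matrix.diagonal ![l₁, l₂] := by
    ext i j
    fin_cases i <;> fin_cases j <;>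
      simp [hB, hP, Matrix.mul_apply, Fin.sum_univ_two, Matrix.diagonal]
    · linear_combination -hr₁
    · linear_combination -hr₂
  have hBconj : B = P * Matrix.diagonal ![l₁, l₂] * P⁻¹ := by
    calc B = B * P * P⁻¹ := (Matrix.mul_nonsing_inv_cancel_right (A := P) B hdu).symm
    _ = P * Matrix.diagonal ![l₁, l₂] * P⁻¹ := by rw [hBP]
  have hexp : ∀ t : ℝ, NormedSpace.exp (t • B)
      = P * Matrix.diagonal (fun i => Complex.exp (t * ![l₁, l₂] i)) * P⁻¹ := by
    intro t
    have hdsm : t • (Matrix.diagonal ![l₁, l₂]) = Matrix.diagonal (fun i => (t:ℂ) * ![l₁, l₂] i) := by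
      ext i j
      fin_cases i <;> fin_cases j <;> simp [Matrix.diagonal, Complex.real_smul]
    have hsm : t • B = P * Matrix.diagonal (fun i => (t : ℂ) * ![l₁, l₂] i) * P⁻¹ := by
      rw [hBconj, ← Matrix.smul_mul, ← Matrix.mul_smul, hdsm]
    rw [hsm, Matrix.exp_conj P _ hPunit, Matrix.exp_diagonal]
    congr 2
    rw [Pi.exp_def]
    funext i
    rw [← Complex.exp_eq_exp_ℂ]
  have hdiag : Tendsto
      (fun t : ℝ => Matrix.diagonal (fun i => Complex.exp (t * ![l₁, l₂] i)))
      atTop (nhds 0) := by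
    have e : ∀ t : ℝ, Matrix.diagonal (fun i => Complex.exp (t * ![l₁, l₂] i))
        = Complex.exp (t * l₁) • (Matrix.diagonal ![1,0] : Matrix (Fin 2) (Fin 2) ℂ)
          + Complex.exp (t * l₂) • (Matrix.diagonal ![0,1] : Matrix (Fin 2) (Fin 2) ℂ) := by
      intro t
      ext i j
      fin_cases i <;> fin_cases j <;> simp [Matrix.diagonal]
    simp only [e]
    have := ((aux_tendsto_cexp h1).smul_const
        ((Matrix.diagonal ![1,0] : Matrix (Fin 2) (Fin 2) ℂ))).add
      ((aux_tendsto_cexp h2).smul_const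
        ((Matrix.diagonal ![0,1] : Matrix (Fin 2) (Fin 2) ℂ)))
    simpa using this
  simp only [hexp]
  have := (hdiag.const_mul P).mul_const P⁻¹
  simpa using this


private lemma aux_jordan (w₁ w₂ : ℝ) (l : ℂ) (hl : l.re < 0)
    (hN : (!![0, 1; -(w₁ : ℂ), -(w₂ : ℂ)] - l • 1) * (!![0, 1; -(w₁ : ℂ), -(w₂ : ℂ)] - l • 1)
      = 0) :
    Tendsto (fun t : ℝ => NormedSpace.exp (t • (!![0, 1; -(w₁ : ℂ), -(w₂ : ℂ)])))
      atTop (nhds 0) := by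
  set B : Matrix (Fin 2) (Fin 2) ℂ := !![0, 1; -(w₁ : ℂ), -(w₂ : ℂ)] with hB
  set N : Matrix (Fin 2) (Fin 2) ℂ := B - l • 1 with hNdef
  have key : ∀ t : ℝ, NormedSpace.exp (t • B)
      = Complex.exp (t * l) • (1 : Matrix (Fin 2) (Fin 2) ℂ)
        + (Complex.exp (t * l) * t) • N := by
    intro t
    have hsplit : t • B = ((t : ℂ) * l) • (1 : Matrix (Fin 2) (Fin 2) ℂ) + (t : ℂ) • N := by
      have hBe : B = l • (1 : Matrix (Fin 2) (Fin 2) ℂ) + N := by rw [hNdef]; abel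
      have e1 : t • (l • (1 : Matrix (Fin 2) (Fin 2) ℂ)) = ((t : ℂ) * l) • 1 := by
        rw [← smul_assoc, Complex.real_smul]
      have e2 : t • N = (t : ℂ) • N := by
        rw [← algebraMap_smul ℂ t N]
        norm_num
      rw [hBe, smul_add, e1, e2]
    have hcomm : Commute (((t : ℂ) * l) • (1 : Matrix (Fin 2) (Fin 2) ℂ)) ((t : ℂ) • N) :=
      (Commute.one_left _).smul_left _ |>.smul_right _
    rw [hsplit, Matrix.exp_add_of_commute _ _ hcomm]
    have h1 : NormedSpace.exp (((t : ℂ) * l) • (1 : Matrix (Fin 2) (Fin 2) ℂ))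
        = Complex.exp (t * l) • (1 : Matrix (Fin 2) (Fin 2) ℂ) := by
      have := map_exp (algebraMap ℂ (Matrix (Fin 2) (Fin 2) ℂ))
        (continuous_algebraMap _ _) ((t : ℂ) * l)
      rw [Algebra.algebraMap_eq_smul_one, Algebra.algebraMap_eq_smul_one] at this
      rw [← Complex.exp_eq_exp_ℂ] at this
      exact this.symm
    have hsq : ((t : ℂ) • N) * ((t : ℂ) • N) = 0 := by
      rw [Matrix.smul_mul, Matrix.mul_smul, hN]
      simp
    have h2 : NormedSpace.exp ((t : ℂ) • N) = 1 + (t : ℂ) • N :=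
      aux_exp_sq_zero _ hsq
    rw [h1, h2, smul_mul_assoc, one_mul, smul_add, smul_smul]
  simp only [key]
  have ha := (aux_tendsto_cexp hl).smul_const (1 : Matrix (Fin 2) (Fin 2) ℂ)
  have hb : Tendsto (fun t : ℝ => Complex.exp (t * l) * (t : ℂ)) atTop (nhds 0) :=
    (aux_tendsto_t_cexp hl).congr fun t => mul_comm _ _
  have hb' := hb.smul_const N
  simpa using ha.add hb'

/-- For gains `w₁, w₂ > 0`, the matrix exponential of the companion matrix
`A = [[0, 1], [−w₁, −w₂]]` of the proportionally controlled double integrator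
tends to zero: `exp (t • A) → 0` as `t → ∞`. -/
theorem matrix_exp_companion_tendsto_zero
    (w₁ w₂ : ℝ) (hw₁ : 0 < w₁) (hw₂ : 0 < w₂)
    (A : Matrix (Fin 2) (Fin 2) ℝ) (hA : A = !![0, 1; -w₁, -w₂]) :
    Filter.Tendsto (fun t : ℝ => NormedSpace.exp (t • A))
      Filter.atTop (nhds 0) := by
  subst hA
  set Bc : Matrix (Fin 2) (Fin 2) ℂ := !![0, 1; -(w₁ : ℂ), -(w₂ : ℂ)] with hBc
  have hC : Tendsto (fun t : ℝ => NormedSpace.exp (t • Bc)) atTop (nhds 0) := by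
    rcases lt_trichotomy (w₂ ^ 2 - 4 * w₁) 0 with hd | hd | hd
    · -- complex conjugate eigenvalues
      set s := Real.sqrt (4 * w₁ - w₂ ^ 2) with hs
      have hs2 : s ^ 2 = 4 * w₁ - w₂ ^ 2 := Real.sq_sqrt (by linarith)
      have hspos : 0 < s := Real.sqrt_pos.mpr (by linarith)
      refine aux_diag w₁ w₂ ⟨-w₂ / 2, s / 2⟩ ⟨-w₂ / 2, -s / 2⟩ ?_ ?_ ?_ ?_ ?_
      · intro h
        rw [Complex.ext_iff] at h
        have := h.2
        simp only at this
        linarith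
      · rw [Complex.ext_iff]
        constructor <;>
          simp [pow_two, Complex.mul_re, Complex.mul_im, Complex.add_re, Complex.add_im,
            Complex.ofReal_re, Complex.ofReal_im] <;> nlinarith [hs2]
      · rw [Complex.ext_iff]
        constructor <;>
          simp [pow_two, Complex.mul_re, Complex.mul_im, Complex.add_re, Complex.add_im,
            Complex.ofReal_re, Complex.ofReal_im] <;> nlinarith [hs2]
      · show -w₂ / 2 < 0; linarith
      · show -w₂ / 2 < 0; linarith
    · -- repeated eigenvalue, Jordan block
      have hw : (w₂ : ℂ) ^ 2 = 4 * (w₁ : ℂ) := by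
        have h : w₂ ^ 2 = 4 * w₁ := by linarith
        exact_mod_cast congrArg (Complex.ofReal) h
      refine aux_jordan w₁ w₂ (-(w₂ : ℂ) / 2) ?_ ?_
      · have he : (-(w₂ : ℂ) / 2) = ((-w₂ / 2 : ℝ) : ℂ) := by push_cast; ring
        rw [he, Complex.ofReal_re]; linarith
      · have hw1 : (w₁ : ℂ) = (w₂ : ℂ) ^ 2 / 4 := by rw [hw]; ring
        ext i j
        fin_cases i <;> fin_cases j <;>
          simp [Matrix.mul_apply, Fin.sum_univ_two, Matrix.sub_apply, Matrix.smul_apply,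
            Matrix.one_apply] <;>
          (try rw [hw1]) <;> ring
    · -- distinct real eigenvalues
      set s := Real.sqrt (w₂ ^ 2 - 4 * w₁) with hs
      have hs2 : s ^ 2 = w₂ ^ 2 - 4 * w₁ := Real.sq_sqrt (by linarith)
      have hspos : 0 < s := Real.sqrt_pos.mpr (by linarith)
      have hsw : s < w₂ := by nlinarith
      have hs2c : (s : ℂ) ^ 2 = (w₂ : ℂ) ^ 2 - 4 * (w₁ : ℂ) := by
        exact_mod_cast congrArg (Complex.ofReal) hs2
      refine aux_diag w₁ w₂ (((-w₂ + s) / 2 : ℝ) : ℂ) (((-w₂ - s) / 2 : ℝ) : ℂ) ?_ ?_ ?_ ?_ ?_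
      · intro h
        rw [Complex.ofReal_inj] at h
        linarith
      · push_cast
        linear_combination hs2c / 4
      · push_cast
        linear_combination hs2c / 4
      · rw [Complex.ofReal_re]; linarith
      · rw [Complex.ofReal_re]; linarith
  have hmapcont : Continuous (fun M : Matrix (Fin 2) (Fin 2) ℝ => M.map Complex.ofReal) :=
    continuous_id.matrix_map Complex.continuous_ofReal
  have hmap : ∀ t : ℝ,
      (NormedSpace.exp (t • !![0, 1; -w₁, -w₂])).map Complex.ofReal
        = NormedSpace.exp (t • Bc) := by
    intro t
    have h1 : ((t • !![0, 1; -w₁, -w₂] : Matrix (Fin 2) (Fin 2) ℝ)).map Complex.ofReal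
        = t • Bc := by
      ext i j
      fin_cases i <;> fin_cases j <;>
        simp [Matrix.map_apply, hBc, Complex.real_smul]
    have h2 := map_exp (Complex.ofRealHom.mapMatrix (m := Fin 2))
      (Continuous.matrix_map continuous_id Complex.continuous_ofReal)
      (t • !![0, 1; -w₁, -w₂])
    have h3 : (Complex.ofRealHom.mapMatrix (m := Fin 2)) (NormedSpace.exp (t • !![0, 1; -w₁, -w₂]))
        = (NormedSpace.exp (t • !![0, 1; -w₁, -w₂])).map Complex.ofReal := rfl
    have h4 : (Complex.ofRealHom.mapMatrix (m := Fin 2)) (t • !![0, 1; -w₁, -w₂])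
        = ((t • !![0, 1; -w₁, -w₂] : Matrix (Fin 2) (Fin 2) ℝ)).map Complex.ofReal := rfl
    rw [← h1]
    exact h2
  have hre : Continuous (fun M : Matrix (Fin 2) (Fin 2) ℂ => M.map Complex.re) :=
    continuous_id.matrix_map Complex.continuous_re
  have heq : (fun t : ℝ => NormedSpace.exp (t • !![0, 1; -w₁, -w₂]))
      = fun t : ℝ => (NormedSpace.exp (t • Bc)).map Complex.re := by
    funext t
    rw [← hmap t]
    ext i j
    simp [Matrix.map_apply]
  rw [heq]
  have := (hre.tendsto 0).comp hC
  simpa [Function.comp_def] using this
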